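/- Assume (s₁ + 2rs₁a)^m = 1/(4r²s₂²a²) for an integer m ≥ 1. Then the vector v ∈ ℝ^(m+2) with coordinates v₀ = 1/(2rs₁s₂a), v₁ = 1/(2rs₁a), and v_{1+j} = (s₁ + 2rs₁a)^(m−j) for j = 1, …, m, satisfies A_m v = v, i.e., v is a fixed vector of A_m. -/

import Mathlib

/-- The (m+2)×(m+2) matrix A_m from the paper, rows/columns indexed 0,…,m+1. -/
noncomputable def Amat (s₁ s₂ r a : ℝ) (m : ℕ) : Matrix (Fin (m + 2)) (Fin (m + 2)) ℝ :=
  Matrix.of fun i j =>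
    if i.val = 0 then
      (if j.val = 0 then 1 / 2 else if j.val = 1 then 1 / (2 * s₂) else 0)
    else if i.val = 1 then
      (if j.val = 0 then 1 / (1 + 2 * r * a)
       else if j.val = 1 ∨ j.val = m + 1 then 1 / (s₁ + 2 * r * s₁ * a) else 0)
    else if i.val = 2 then
      (if 1 ≤ j.val then 1 / (s₂ + 2 * r * s₂ * a) else 0)
    else
      (if j.val + 1 = i.val then 1 / (s₁ + 2 * r * s₁ * a) else 0)

theorem stmt_3 (s₁ s₂ r a : ℝ) (hs₁ : 1 < s₁) (hs₂ : 1 < s₂)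
    (hsum : 1 / s₁ + 1 / s₂ = 1) (hr : 0 < r) (ha : 0 < a)
    (m : ℕ) (hm : 1 ≤ m)
    (hmarkov : (s₁ + 2 * r * s₁ * a) ^ m = 1 / (4 * r ^ 2 * s₂ ^ 2 * a ^ 2))
    (v : Fin (m + 2) → ℝ)
    (hv0 : v 0 = 1 / (2 * r * s₁ * s₂ * a))
    (hv1 : v 1 = 1 / (2 * r * s₁ * a))
    (hvj : ∀ k : Fin (m + 2), 2 ≤ k.val → v k = (s₁ + 2 * r * s₁ * a) ^ (m + 1 - k.val)) :
    (Amat s₁ s₂ r a m).mulVec v = v := by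
  have hs1p : (0:ℝ) < s₁ := by linarith
  have hs2p : (0:ℝ) < s₂ := by linarith
  have hc1 : (1:ℝ) < s₁ + 2 * r * s₁ * a := by nlinarith [mul_pos (mul_pos hr hs1p) ha]
  have hcpos : (0:ℝ) < s₁ + 2 * r * s₁ * a := by linarith
  have hcne : s₁ + 2 * r * s₁ * a ≠ 0 := ne_of_gt hcpos
  have hc1ne : s₁ + 2 * r * s₁ * a - 1 ≠ 0 := sub_ne_zero.mpr (ne_of_gt hc1)
  have hrane : (1:ℝ) + 2 * r * a ≠ 0 := by nlinarith
  have hs : s₁ + s₂ = s₁ * s₂ := by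
    field_simp at hsum; linarith
  have h11 : s₁ - 1 ≠ 0 := sub_ne_zero.mpr (ne_of_gt hs₁)
  have hs2v : s₂ = s₁ / (s₁ - 1) := by
    rw [eq_div_iff h11]; linear_combination -hs
  funext i
  rw [Matrix.mulVec, dotProduct]
  obtain ⟨iv, hi⟩ := i
  rcases iv with _ | _ | _ | n
  · -- row 0
    have h0 : (⟨0, hi⟩ : Fin (m + 2)) = 0 := rfl
    have hterm : ∀ j : Fin (m + 2),
        Amat s₁ s₂ r a m ⟨0, hi⟩ j * v j
          = (if (j : ℕ) = 0 then 1 / 2 * (1 / (2 * r * s₁ * s₂ * a)) else 0)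
            + (if (j : ℕ) = 1 then 1 / (2 * s₂) * (1 / (2 * r * s₁ * a)) else 0) := by
      intro j
      obtain ⟨jv, hj⟩ := j
      rcases jv with _ | _ | jv
      · have e : (⟨0, hj⟩ : Fin (m + 2)) = 0 := rfl
        simp [Amat, e, hv0]
      · have e : (⟨1, hj⟩ : Fin (m + 2)) = 1 := by ext; simp
        simp [Amat, e, hv1]
      · simp [Amat]
    rw [Finset.sum_congr rfl fun j _ => hterm j, Finset.sum_add_distrib,
      Fin.sum_univ_eq_sum_range
        (fun n => if n = 0 then 1 / 2 * (1 / (2 * r * s₁ * s₂ * a)) else 0),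
      Fin.sum_univ_eq_sum_range
        (fun n => if n = 1 then 1 / (2 * s₂) * (1 / (2 * r * s₁ * a)) else 0),
      Finset.sum_ite_eq' , Finset.sum_ite_eq', h0, hv0,
      if_pos (Finset.mem_range.mpr (show 0 < m + 2 by omega)),
      if_pos (Finset.mem_range.mpr (show 1 < m + 2 by omega))]
    field_simp
    ring
  · -- row 1
    have h1 : (⟨1, hi⟩ : Fin (m + 2)) = 1 := by ext; simp
    have hterm : ∀ j : Fin (m + 2),
        Amat s₁ s₂ r a m ⟨1, hi⟩ j * v j
          = (if (j : ℕ) = 0 then 1 / (1 + 2 * r * a) * (1 / (2 * r * s₁ * s₂ * a)) else 0)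
            + (if (j : ℕ) = 1 then 1 / (s₁ + 2 * r * s₁ * a) * (1 / (2 * r * s₁ * a)) else 0)
            + (if (j : ℕ) = m + 1 then 1 / (s₁ + 2 * r * s₁ * a) else 0) := by
      intro j
      obtain ⟨jv, hj⟩ := j
      rcases jv with _ | _ | jv
      · have e : (⟨0, hj⟩ : Fin (m + 2)) = 0 := rfl
        simp [Amat, e, hv0, show (0:ℕ) ≠ m + 1 by omega]
      · have e : (⟨1, hj⟩ : Fin (m + 2)) = 1 := by ext; simp
        simp [Amat, e, hv1, show (1:ℕ) ≠ m + 1 by omega, show m ≠ 0 by omega]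
      · have hvv : v ⟨jv + 2, hj⟩ = (s₁ + 2 * r * s₁ * a) ^ (m + 1 - (jv + 2)) :=
          hvj _ (show 2 ≤ jv + 2 by omega)
        rw [hvv]
        by_cases hcase : jv + 2 = m + 1
        · rw [show m + 1 - (jv + 2) = 0 by omega, pow_zero]
          simp [Amat, hcase, show ¬(m + 1 = 1) by omega, show ¬(m + 1 = 0) by omega, show m ≠ 0 by omega]
        · simp [Amat, hcase, show jv + 2 ≠ 1 by omega, show jv + 1 ≠ m by omega]
    rw [Finset.sum_congr rfl fun j _ => hterm j, Finset.sum_add_distrib,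
      Finset.sum_add_distrib,
      Fin.sum_univ_eq_sum_range
        (fun n => if n = 0 then 1 / (1 + 2 * r * a) * (1 / (2 * r * s₁ * s₂ * a)) else 0),
      Fin.sum_univ_eq_sum_range
        (fun n => if n = 1 then 1 / (s₁ + 2 * r * s₁ * a) * (1 / (2 * r * s₁ * a)) else 0),
      Fin.sum_univ_eq_sum_range
        (fun n => if n = m + 1 then 1 / (s₁ + 2 * r * s₁ * a) else 0),
      Finset.sum_ite_eq', Finset.sum_ite_eq', Finset.sum_ite_eq', h1, hv1,
      if_pos (Finset.mem_range.mpr (show 0 < m + 2 by omega)),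
      if_pos (Finset.mem_range.mpr (show 1 < m + 2 by omega)),
      if_pos (Finset.mem_range.mpr (show m + 1 < m + 2 by omega))]
    rw [hs2v]
    field_simp
    ring
  · -- row 2
    have hvv2 : v ⟨2, hi⟩ = (s₁ + 2 * r * s₁ * a) ^ (m + 1 - 2) := hvj _ (show 2 ≤ 2 by omega)
    have hterm : ∀ j : Fin (m + 2),
        Amat s₁ s₂ r a m ⟨2, hi⟩ j * v j
          = (if (j : ℕ) = 1 then 1 / (s₂ + 2 * r * s₂ * a) * (1 / (2 * r * s₁ * a)) else 0)
            + (if 2 ≤ (j : ℕ) then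
                1 / (s₂ + 2 * r * s₂ * a) * (s₁ + 2 * r * s₁ * a) ^ (m + 1 - (j : ℕ))
              else 0) := by
      intro j
      obtain ⟨jv, hj⟩ := j
      rcases jv with _ | _ | jv
      · simp [Amat]
      · have e : (⟨1, hj⟩ : Fin (m + 2)) = 1 := by ext; simp
        simp [Amat, e, hv1]
      · have hvv : v ⟨jv + 2, hj⟩ = (s₁ + 2 * r * s₁ * a) ^ (m + 1 - (jv + 2)) :=
          hvj _ (show 2 ≤ jv + 2 by omega)
        simp [Amat, hvv]
    rw [Finset.sum_congr rfl fun j _ => hterm j, Finset.sum_add_distrib,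
      Fin.sum_univ_eq_sum_range
        (fun n => if n = 1 then 1 / (s₂ + 2 * r * s₂ * a) * (1 / (2 * r * s₁ * a)) else 0),
      Fin.sum_univ_eq_sum_range
        (fun n => if 2 ≤ n then
            1 / (s₂ + 2 * r * s₂ * a) * (s₁ + 2 * r * s₁ * a) ^ (m + 1 - n) else 0),
      Finset.sum_ite_eq', hvv2,
      if_pos (Finset.mem_range.mpr (show 1 < m + 2 by omega))]
    have hsplit :
        (∑ n ∈ Finset.range (m + 2), if 2 ≤ n then
            1 / (s₂ + 2 * r * s₂ * a) * (s₁ + 2 * r * s₁ * a) ^ (m + 1 - n) else 0)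
          = 1 / (s₂ + 2 * r * s₂ * a) *
              ((s₁ + 2 * r * s₁ * a) ^ m - 1) / (s₁ + 2 * r * s₁ * a - 1) := by
      rw [show m + 2 = 2 + m by omega, Finset.sum_range_add]
      have e1 : (∑ i ∈ Finset.range 2, if 2 ≤ i then
          1 / (s₂ + 2 * r * s₂ * a) * (s₁ + 2 * r * s₁ * a) ^ (m + 1 - i) else 0) = 0 := by
        norm_num [Finset.sum_range_succ]
      rw [e1, zero_add]
      have e2 : ∀ i ∈ Finset.range m,
          (if 2 ≤ 2 + i then
              1 / (s₂ + 2 * r * s₂ * a) * (s₁ + 2 * r * s₁ * a) ^ (m + 1 - (2 + i)) else 0)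
            = 1 / (s₂ + 2 * r * s₂ * a) * (s₁ + 2 * r * s₁ * a) ^ (m - 1 - i) := by
        intro i hi2
        rw [if_pos (Nat.le_add_right 2 i), show m + 1 - (2 + i) = m - 1 - i by omega]
      rw [Finset.sum_congr rfl e2, ← Finset.mul_sum,
        Finset.sum_range_reflect (fun i => (s₁ + 2 * r * s₁ * a) ^ i) m,
        geom_sum_eq (ne_of_gt hc1)]
      ring
    rw [hsplit]
    have hme : m + 1 - 2 = m - 1 := by omega
    rw [hme]
    have hpow : (s₁ + 2 * r * s₁ * a) ^ (m - 1)
        = 1 / (4 * r ^ 2 * s₂ ^ 2 * a ^ 2) / (s₁ + 2 * r * s₁ * a) := by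
      rw [eq_div_iff hcne, ← pow_succ, show m - 1 + 1 = m by omega, hmarkov]
    rw [hpow, hmarkov]
    rw [hs2v]
    field_simp [show s₁ * (1 + 2 * r * a) - 1 ≠ 0 by intro h; apply hc1ne; linarith [h]]
    ring
  · -- rows 3..m+1
    have hvv : v ⟨n + 3, hi⟩ = (s₁ + 2 * r * s₁ * a) ^ (m + 1 - (n + 3)) :=
      hvj _ (show 2 ≤ n + 3 by omega)
    have hterm : ∀ j : Fin (m + 2),
        Amat s₁ s₂ r a m ⟨n + 3, hi⟩ j * v j
          = (if (j : ℕ) = n + 2 then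
              1 / (s₁ + 2 * r * s₁ * a) * (s₁ + 2 * r * s₁ * a) ^ (m + 1 - (n + 2))
            else 0) := by
      intro j
      obtain ⟨jv, hj⟩ := j
      by_cases hcase : jv = n + 2
      · subst hcase
        have hvv' : v ⟨n + 2, hj⟩ = (s₁ + 2 * r * s₁ * a) ^ (m + 1 - (n + 2)) :=
          hvj _ (show 2 ≤ n + 2 by omega)
        simp [Amat, hvv']
      · have h1 : jv + 1 ≠ n + 3 := by omega
        rcases jv with _ | _ | jv
        · simp [Amat, hcase]
        · simp [Amat, hcase, h1]
        · simp [Amat, hcase, h1, show jv ≠ n by omega]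
    rw [Finset.sum_congr rfl fun j _ => hterm j,
      Fin.sum_univ_eq_sum_range
        (fun k => if k = n + 2 then
            1 / (s₁ + 2 * r * s₁ * a) * (s₁ + 2 * r * s₁ * a) ^ (m + 1 - (n + 2)) else 0),
      Finset.sum_ite_eq', hvv]
    rw [if_pos (Finset.mem_range.mpr (by omega))]
    rw [show m + 1 - (n + 2) = (m + 1 - (n + 3)) + 1 by omega, pow_succ]
    field_simp
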